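/- Let d ≥ 1 and let P be a finite nonempty set of points in the d-dimensional Euclidean space EuclideanSpace ℝ (Fin d). Let closedBall(c, r) be a smallest enclosing ball of P. Then there exists a subset Q ⊆ P with Q of cardinality at most d + 1 such that every point of Q lies on the boundary sphere (i.e. dist(q, c) = r for all q ∈ Q) and c lies in the convex hull of Q. In particular, c lies in the convex hull of P. -/

import Mathlib

open Metric

/-- `closedBall c r` is a smallest enclosing ball of `P`: it contains `P` and every
closed ball containing `P` has radius at least `r`. -/
def IsSEB {E : Type*} [NormedAddCommGroup E] [InnerProductSpace ℝ E]
    (P : Set E) (c : E) (r : ℝ) : Prop :=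
  P ⊆ closedBall c r ∧ ∀ c' r', P ⊆ closedBall c' r' → r ≤ r'

/-- If all points of a nonempty finset are strictly within distance `r` of some center,
then `closedBall c r` is not a SEB. -/
lemma not_seb_of_strict {E : Type*} [NormedAddCommGroup E] [InnerProductSpace ℝ E]
    {P : Finset E} (hP : P.Nonempty) {c c' : E} {r : ℝ}
    (hSEB : IsSEB (↑P) c r) (h : ∀ p ∈ P, dist p c' < r) : False := by
  set r'' := P.sup' hP (fun p => dist p c') with hr''
  have h1 : (↑P : Set E) ⊆ closedBall c' r'' := by
    intro p hp
    simp only [mem_closedBall]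
    exact Finset.le_sup' (fun p => dist p c') hp
  have h2 := hSEB.2 c' r'' h1
  have h3 : r'' < r := (Finset.sup'_lt_iff hP).2 h
  linarith

lemma center_mem_hull_boundary {E : Type*} [NormedAddCommGroup E] [InnerProductSpace ℝ E]
    [CompleteSpace E] {P : Finset E} (hP : P.Nonempty) {c : E} {r : ℝ}
    (hSEB : IsSEB (↑P) c r) :
    c ∈ convexHull ℝ (↑(P.filter (fun p => dist p c = r)) : Set E) := by
  classical
  set S := P.filter (fun p => dist p c = r) with hS
  by_cases hSne : S.Nonempty
  · by_contra hc
    -- separate c from the hull of S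
    have hKcl : IsClosed (convexHull ℝ (↑S : Set E)) := (S.finite_toSet).isClosed_convexHull (𝕜 := ℝ)
    obtain ⟨f, u, hfc, hfb⟩ := geometric_hahn_banach_point_closed (convex_convexHull ℝ _) hKcl hc
    set v : E := (InnerProductSpace.toDual ℝ E).symm f with hv
    have hfv : ∀ x, inner ℝ v x = f x := fun x => InnerProductSpace.toDual_symm_apply
    have hδ : 0 < u - f c := by linarith
    set δ := u - f c with hδdef
    have hsep : ∀ s ∈ S, δ ≤ inner ℝ v (s - c) := by
      intro s hs
      have := hfb s (subset_convexHull ℝ _ (by exact_mod_cast hs))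
      rw [hfv, map_sub]
      linarith
    have hvne : v ≠ 0 := by
      obtain ⟨s₀, hs₀⟩ := hSne
      intro h0
      have := hsep s₀ hs₀
      rw [h0] at this
      simp only [inner_zero_left] at this
      linarith
    set N := ‖v‖ with hN
    have hN0 : 0 < N := norm_pos_iff.2 hvne
    -- uniform gap for non-boundary points
    have hgap : ∃ ε > 0, ∀ p ∈ P, p ∉ S → dist p c + ε ≤ r := by
      by_cases hPS : (P \ S).Nonempty
      · refine ⟨r - (P \ S).sup' hPS (fun p => dist p c), ?_, ?_⟩
        · rw [gt_iff_lt, sub_pos]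
          refine (Finset.sup'_lt_iff hPS).2 fun p hp => ?_
          rw [Finset.mem_sdiff] at hp
          have h1 : dist p c ≤ r := by
            have := hSEB.1 (show p ∈ (↑P : Set E) from hp.1)
            simpa using this
          have h2 : dist p c ≠ r := by
            intro he
            exact hp.2 (Finset.mem_filter.2 ⟨hp.1, he⟩)
          exact lt_of_le_of_ne h1 h2
        · intro p hp hps
          have : dist p c ≤ (P \ S).sup' hPS (fun p => dist p c) :=
            Finset.le_sup' (fun q => dist q c) (Finset.mem_sdiff.2 ⟨hp, hps⟩)
          linarith
      · refine ⟨1, one_pos, fun p hp hps => absurd ⟨p, Finset.mem_sdiff.2 ⟨hp, hps⟩⟩ hPS⟩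
    obtain ⟨ε, hε, hgap⟩ := hgap
    set t := min (δ / N ^ 2) (ε / N) / 2 with ht
    have ht0 : 0 < t := by
      apply div_pos _ two_pos
      exact lt_min (div_pos hδ (by positivity)) (div_pos hε hN0)
    have htN2 : t * N ^ 2 ≤ δ / 2 := by
      have : t ≤ δ / N ^ 2 / 2 := by
        rw [ht]
        gcongr
        exact min_le_left _ _
      calc t * N ^ 2 ≤ δ / N ^ 2 / 2 * N ^ 2 := by gcongr
        _ = δ / 2 := by field_simp
    have htN : t * N < ε := by
      have : t ≤ ε / N / 2 := by
        rw [ht]; gcongr; exact min_le_right _ _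
      have h2 : t * N ≤ ε / N / 2 * N := by gcongr
      have : ε / N / 2 * N = ε / 2 := by field_simp
      nlinarith
    have hr0 : 0 ≤ r := by
      obtain ⟨p, hp⟩ := hP
      have := hSEB.1 (show p ∈ (↑P : Set E) from hp)
      simp only [mem_closedBall] at this
      linarith [dist_nonneg (x := p) (y := c)]
    refine not_seb_of_strict hP hSEB (c' := c + t • v) fun p hp => ?_
    by_cases hps : p ∈ S
    · -- boundary point: squared distance decreases
      have hdr : dist p c = r := (Finset.mem_filter.1 hps).2
      have hinner := hsep p hps
      rw [real_inner_comm] at hinner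
      have key : dist p (c + t • v) ^ 2 < r ^ 2 := by
        have : dist p (c + t • v) ^ 2 = ‖(p - c) - t • v‖ ^ 2 := by
          rw [dist_eq_norm, sub_add_eq_sub_sub]
        rw [this, norm_sub_sq_real, real_inner_smul_right, norm_smul,
          Real.norm_eq_abs, abs_of_pos ht0]
        have h1 : ‖p - c‖ = r := by rw [← dist_eq_norm, hdr]
        rw [h1, mul_pow]
        nlinarith
      exact lt_of_pow_lt_pow_left₀ 2 hr0 key
    · -- interior point
      calc dist p (c + t • v) ≤ dist p c + dist c (c + t • v) := dist_triangle _ _ _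
        _ = dist p c + t * N := by
            rw [dist_self_add_right, norm_smul, Real.norm_eq_abs, abs_of_pos ht0]
        _ < dist p c + ε := by linarith
        _ ≤ r := hgap p hp hps
  · -- no boundary points: shrink radius with same center
    exfalso
    refine not_seb_of_strict hP hSEB (c' := c) fun p hp => ?_
    have h1 : dist p c ≤ r := by
      have := hSEB.1 (show p ∈ (↑P : Set E) from hp)
      simpa using this
    refine lt_of_le_of_ne h1 fun he => ?_
    exact hSne ⟨p, Finset.mem_filter.2 ⟨hp, he⟩⟩

theorem stmt0 (d : ℕ) (hd : 1 ≤ d) (P : Finset (EuclideanSpace ℝ (Fin d)))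
    (hP : P.Nonempty) (c : EuclideanSpace ℝ (Fin d)) (r : ℝ)
    (hSEB : IsSEB (↑P) c r) :
    ∃ Q : Finset (EuclideanSpace ℝ (Fin d)), Q ⊆ P ∧ Q.card ≤ d + 1 ∧
      (∀ q ∈ Q, dist q c = r) ∧ c ∈ convexHull ℝ (↑Q : Set (EuclideanSpace ℝ (Fin d))) ∧
      c ∈ convexHull ℝ (↑P : Set (EuclideanSpace ℝ (Fin d))) := by
  classical
  have hc := center_mem_hull_boundary hP hSEB
  set S := P.filter (fun p => dist p c = r) with hS
  have hcP : c ∈ convexHull ℝ (↑P : Set (EuclideanSpace ℝ (Fin d))) :=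
    convexHull_mono (by exact_mod_cast Finset.filter_subset _ P) hc
  rw [convexHull_eq_union] at hc
  simp only [Set.mem_iUnion] at hc
  obtain ⟨Q, hQS, hai, hcQ⟩ := hc
  refine ⟨Q, ?_, ?_, ?_, hcQ, hcP⟩
  · intro q hq
    exact Finset.filter_subset _ P (by exact_mod_cast hQS hq)
  · have h1 := hai.card_le_finrank_succ
    rw [Fintype.card_coe] at h1
    refine h1.trans ?_
    have h2 : Module.finrank ℝ (vectorSpan ℝ (Set.range ((↑) : Q → EuclideanSpace ℝ (Fin d))))
        ≤ Module.finrank ℝ (EuclideanSpace ℝ (Fin d)) := Submodule.finrank_le _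
    rw [finrank_euclideanSpace_fin] at h2
    omega
  · intro q hq
    have : q ∈ S := by exact_mod_cast hQS hq
    exact (Finset.mem_filter.1 this).2
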